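/- For n ≥ 2 and k ≥ 2, if exactly one word w is removed from A^n, the resulting set A^n ∖ {w} admits a universal cycle if and only if w is a constant word x^n; hence P_c(n,k,1) = k/k^n = 1/k^{n−1}. -/

import Mathlib

set_option linter.unusedSectionVars false
set_option maxHeartbeats 1000000

/-- Words of length `n` over a `k`-letter alphabet (letters are `Fin k`). -/
abbrev Word (n k : ℕ) := Fin n → Fin k

/-- De Bruijn adjacency: there is an edge `x₁x₂⋯xₙ → x₂⋯xₙx_{n+1}`,
i.e. `v` is obtained from `u` by shifting one position to the left. -/
def dbAdj {n k : ℕ} (u v : Word n k) : Prop :=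
  ∀ (i : ℕ) (h : i + 1 < n), v ⟨i, by omega⟩ = u ⟨i + 1, h⟩

/-- `S` admits a universal cycle: a circular word of length `|S|` (necessarily of
length at least `n` so that it has genuine cyclic subwords of length `n`) in which
every word of `S` occurs exactly once as a cyclic contiguous subword of length `n`. -/
def HasUCycle {n k : ℕ} (S : Finset (Word n k)) : Prop :=
  n ≤ S.card ∧ ∃ u : Fin S.card → Fin k, ∀ w ∈ S, ∃! i : Fin S.card,
    ∀ j : Fin n, w j = u ⟨((i : ℕ) + (j : ℕ)) % S.card, Nat.mod_lt _ i.pos⟩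


section Euler
variable {V E : Type*} [DecidableEq V] [DecidableEq E] [Fintype E]

/-- Counting in/out incidences along a trail. -/
lemma trail_count (s t : E → V) (v : V) :
    ∀ (L : List E) (hL : L ≠ []), List.Chain' (fun a b => t a = s b) L →
    (L.countP (fun e => decide (s e = v))) + (if t (L.getLast hL) = v then 1 else 0)
    = (L.countP (fun e => decide (t e = v))) + (if s (L.head hL) = v then 1 else 0) := by
  intro L
  induction L with
  | nil => intro h; exact absurd rfl h
  | cons e L' ih =>
    intro _ hc
    rcases eq_or_ne L' [] with rfl | hne
    · simp only [List.countP_cons, List.countP_nil, List.getLast_singleton, List.head_cons]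
      split_ifs <;> simp_all
    · have hc' : List.Chain' (fun a b => t a = s b) L' := hc.tail
      have hjunction : t e = s (L'.head hne) := by
        have := List.isChain_cons.mp hc |>.1
        have h2 := List.head?_eq_head hne
        exact this _ h2
      have IH := ih hne hc'
      rw [List.getLast_cons hne, List.head_cons]
      rw [List.countP_cons, List.countP_cons]
      rw [← hjunction] at IH
      simp only [decide_eq_true_eq] at IH ⊢
      split_ifs at IH ⊢ <;> omega

lemma countP_le_card (s' : E → V) (v : V) (L : List E) (h : L.Nodup) :
    L.countP (fun e => decide (s' e = v)) ≤ (Finset.univ.filter (fun e => s' e = v)).card := by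
  rw [List.countP_eq_length_filter]
  have hnd : (L.filter (fun e => decide (s' e = v))).Nodup := h.filter _
  rw [← List.toFinset_card_of_nodup hnd]
  apply Finset.card_le_card
  intro e he
  simp only [List.mem_toFinset, List.mem_filter, decide_eq_true_eq] at he
  simp [he.2]

lemma countP_eq_card (s' : E → V) (v : V) (L : List E) (h : L.Nodup)
    (hall : ∀ e, s' e = v → e ∈ L) :
    L.countP (fun e => decide (s' e = v)) = (Finset.univ.filter (fun e => s' e = v)).card := by
  rw [List.countP_eq_length_filter]
  have hnd : (L.filter (fun e => decide (s' e = v))).Nodup := h.filter _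
  rw [← List.toFinset_card_of_nodup hnd]
  congr 1
  ext e
  simp only [List.mem_toFinset, List.mem_filter, decide_eq_true_eq, Finset.mem_filter,
    Finset.mem_univ, true_and]
  exact ⟨fun h => h.2, fun h => ⟨hall e h, h⟩⟩

/-- A maximal trail in a balanced graph is closed. -/
lemma maximal_closed (s t : E → V)
    (bal : ∀ v, (Finset.univ.filter (fun e => s e = v)).card
      = (Finset.univ.filter (fun e => t e = v)).card)
    (F : List E)
    (hF : ∀ v, F.countP (fun e => decide (s e = v)) = F.countP (fun e => decide (t e = v)))
    (M : List E) (hMne : M ≠ []) (hnd : (F ++ M).Nodup)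
    (hch : List.Chain' (fun a b => t a = s b) M)
    (hmax : ∀ e, s e = t (M.getLast hMne) → e ∈ F ++ M) :
    t (M.getLast hMne) = s (M.head hMne) := by
  have h1 : (F ++ M).countP (fun e => decide (s e = t (M.getLast hMne)))
      = (Finset.univ.filter (fun e => s e = t (M.getLast hMne))).card :=
    countP_eq_card s _ (F ++ M) hnd hmax
  have h2 : (F ++ M).countP (fun e => decide (t e = t (M.getLast hMne)))
      ≤ (Finset.univ.filter (fun e => s e = t (M.getLast hMne))).card := by
    rw [bal]; exact countP_le_card t _ (F ++ M) hnd
  rw [List.countP_append] at h1 h2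
  have h3 := hF (t (M.getLast hMne))
  have h4 := trail_count s t (t (M.getLast hMne)) M hMne hch
  rw [if_pos rfl] at h4
  by_contra hne
  rw [if_neg (fun h => hne h.symm)] at h4
  omega

/-- Extend a trail (edge-disjoint from a "balanced" list `F`) to a maximal one, which is
then closed. -/
lemma extend_to_closed (s t : E → V)
    (bal : ∀ v, (Finset.univ.filter (fun e => s e = v)).card
      = (Finset.univ.filter (fun e => t e = v)).card)
    (F : List E)
    (hF : ∀ v, F.countP (fun e => decide (s e = v)) = F.countP (fun e => decide (t e = v))) :
    ∀ (d : ℕ) (M : List E) (hMne : M ≠ []), (F ++ M).Nodup →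
    List.Chain' (fun a b => t a = s b) M →
    Fintype.card E ≤ d + M.length →
    ∃ (M' : List E) (hne : M' ≠ []), M <+: M' ∧ (F ++ M').Nodup ∧
      List.Chain' (fun a b => t a = s b) M' ∧
      M'.head hne = M.head hMne ∧ t (M'.getLast hne) = s (M'.head hne) := by
  intro d
  induction d with
  | zero =>
    intro M hMne hnd hch hcard
    by_cases hex : ∃ e, e ∉ F ++ M ∧ s e = t (M.getLast hMne)
    · exfalso
      obtain ⟨e, he1, -⟩ := hex
      have h1 : (e :: (F ++ M)).Nodup := List.nodup_cons.mpr ⟨he1, hnd⟩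
      have h2 := List.Nodup.length_le_card h1
      simp only [List.length_cons, List.length_append] at h2
      omega
    · push_neg at hex
      exact ⟨M, hMne, List.prefix_refl M, hnd, hch, rfl,
        maximal_closed s t bal F hF M hMne hnd hch (fun e h => by by_contra hn; exact hex e hn h)⟩
  | succ d ih =>
    intro M hMne hnd hch hcard
    by_cases hex : ∃ e, e ∉ F ++ M ∧ s e = t (M.getLast hMne)
    · obtain ⟨e, he1, he2⟩ := hex
      have hne2 : M ++ [e] ≠ [] := by simp
      have hnd2 : (F ++ (M ++ [e])).Nodup := by
        rw [← List.append_assoc]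
        rw [List.nodup_append]
        exact ⟨hnd, List.nodup_singleton e, fun x hx y hy => by
          simp only [List.mem_singleton] at hy; subst hy; rintro rfl; exact he1 hx⟩
      have hch2 : List.Chain' (fun a b => t a = s b) (M ++ [e]) := by
        refine List.isChain_append.mpr ?_
        refine ⟨hch, List.isChain_singleton e, ?_⟩
        intro x hx y hy
        rw [List.getLast?_eq_getLast hMne] at hx
        simp only [List.head?_cons, Option.mem_some_iff] at hx hy
        rw [← hx, ← hy]; exact he2.symm
      have hcard2 : Fintype.card E ≤ d + (M ++ [e]).length := by
        simp only [List.length_append, List.length_singleton]; omega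
      obtain ⟨M', hne', hpre, hnd', hch', hhead, hclosed⟩ := ih (M ++ [e]) hne2 hnd2 hch2 hcard2
      refine ⟨M', hne', (List.prefix_append M [e]).trans hpre, hnd', hch', ?_, hclosed⟩
      rw [hhead, List.head_append_of_ne_nil hMne]
    · push_neg at hex
      exact ⟨M, hMne, List.prefix_refl M, hnd, hch, rfl,
        maximal_closed s t bal F hF M hMne hnd hch (fun e h => by by_contra hn; exact hex e hn h)⟩

/-- Cyclic closed trail, in "get" form. -/
def Cyc (s t : E → V) (L : List E) : Prop :=
  L.Nodup ∧ ∀ (i : ℕ) (h : i < L.length),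
    t (L.get ⟨i, h⟩) = s (L.get ⟨(i+1) % L.length, Nat.mod_lt _ (by omega)⟩)

lemma cyc_mk (s t : E → V) (L : List E) (hnd : L.Nodup)
    (hch : List.Chain' (fun a b => t a = s b) L) (hne : L ≠ [])
    (hwrap : t (L.getLast hne) = s (L.head hne)) : Cyc s t L := by
  refine ⟨hnd, fun i h => ?_⟩
  rcases lt_or_eq_of_le (Nat.succ_le_of_lt h) with h2 | h2
  · have hmod : (i+1) % L.length = i + 1 := Nat.mod_eq_of_lt h2
    simp only [hmod]
    exact List.isChain_iff_getElem.mp hch i (by omega)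
  · have h3 : i + 1 = L.length := h2
    have hmod : (i+1) % L.length = 0 := by rw [h3, Nat.mod_self]
    simp only [hmod]
    have hi : i = L.length - 1 := by omega
    subst hi
    simp only [List.get_eq_getElem, List.getLast_eq_getElem, List.head_eq_getElem] at hwrap ⊢
    exact hwrap

lemma cyc_chain' {s t : E → V} {L : List E} (h : Cyc s t L) :
    List.Chain' (fun a b => t a = s b) L := by
  refine List.isChain_iff_getElem.mpr ?_
  intro i hi
  have h2 := h.2 i (by omega)
  have hmod : (i+1) % L.length = i + 1 := Nat.mod_eq_of_lt (by omega)
  simp only [hmod] at h2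
  exact h2

lemma cyc_wrap {s t : E → V} {L : List E} (h : Cyc s t L) (hne : L ≠ []) :
    t (L.getLast hne) = s (L.head hne) := by
  have hlen : 0 < L.length := List.length_pos_iff.mpr hne
  have h2 := h.2 (L.length - 1) (by omega)
  have hmod : (L.length - 1 + 1) % L.length = 0 := by
    rw [Nat.sub_add_cancel hlen]; exact Nat.mod_self _
  simp only [hmod] at h2
  simp only [List.get_eq_getElem, List.getLast_eq_getElem, List.head_eq_getElem] at h2 ⊢
  exact h2

lemma cyc_rotate {s t : E → V} {L : List E} (h : Cyc s t L) (m : ℕ) :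
    Cyc s t (L.rotate m) := by
  refine ⟨List.nodup_rotate.mpr h.1, fun i hi => ?_⟩
  have hlen : (L.rotate m).length = L.length := List.length_rotate L m
  have hpos : 0 < L.length := by omega
  rw [List.get_rotate, List.get_rotate]
  have key := h.2 ((i + m) % L.length) (Nat.mod_lt _ hpos)
  rw [key]
  have hidx2 : ((i+1) % (L.rotate m).length + m) % L.length
      = ((i + m) % L.length + 1) % L.length := by
    rw [hlen, Nat.mod_add_mod, Nat.mod_add_mod]
    congr 1
    omega
  simp only [hidx2]

lemma cyc_countP {s t : E → V} {L : List E} (h : Cyc s t L) (v : V) :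
    L.countP (fun e => decide (s e = v)) = L.countP (fun e => decide (t e = v)) := by
  rcases eq_or_ne L [] with rfl | hne
  · simp
  · have h4 := trail_count s t v L hne (cyc_chain' h)
    rw [cyc_wrap h hne] at h4
    omega

lemma cyc_next {s t : E → V} {L : List E} (h : Cyc s t L) (g : E) (hg : g ∈ L) :
    ∃ g', g' ∈ L ∧ t g = s g' := by
  obtain ⟨i, rfl⟩ := List.mem_iff_get.mp hg
  exact ⟨_, List.get_mem _ _, h.2 i i.2⟩

lemma reach_escape (s t : E → V) {L : List E} (hne : L ≠ []) (hC : Cyc s t L)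
    (conn : ∀ e f : E, Relation.ReflTransGen (fun a b => ∃ g : E, s g = a ∧ t g = b) (t e) (s f))
    (f : E) (hf : f ∉ L) : ∃ e, e ∉ L ∧ ∃ g ∈ L, s e = s g := by
  have claim : ∀ a c, Relation.ReflTransGen (fun a b => ∃ g : E, s g = a ∧ t g = b) a c →
      (∃ g ∈ L, s g = a) → (∃ g ∈ L, s g = c) ∨ (∃ e, e ∉ L ∧ ∃ g ∈ L, s e = s g) := by
    intro a c hpath
    induction hpath with
    | refl => exact fun ha => Or.inl ha
    | tail hab hbc ih =>
      intro ha
      rcases ih ha with hb | hdone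
      · obtain ⟨g', hg', hsg'⟩ := hb
        obtain ⟨ed, hsed, hted⟩ := hbc
        by_cases hm : ed ∈ L
        · obtain ⟨g'', hg'', ht⟩ := cyc_next hC ed hm
          exact Or.inl ⟨g'', hg'', by rw [← ht, hted]⟩
        · exact Or.inr ⟨ed, hm, g', hg', by rw [hsed, ← hsg']⟩
      · exact Or.inr hdone
  have hstart : ∃ g ∈ L, s g = t (L.head hne) := by
    obtain ⟨g', hg', ht⟩ := cyc_next hC (L.head hne) (List.head_mem hne)
    exact ⟨g', hg', ht.symm⟩
  rcases claim _ _ (conn (L.head hne) f) hstart with hl | hr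
  · obtain ⟨g, hg, hsg⟩ := hl
    exact ⟨f, hf, g, hg, hsg.symm⟩
  · exact hr

theorem euler_circuit (s t : E → V)
    (bal : ∀ v, (Finset.univ.filter (fun e => s e = v)).card
      = (Finset.univ.filter (fun e => t e = v)).card)
    (conn : ∀ e f : E, Relation.ReflTransGen (fun a b => ∃ g : E, s g = a ∧ t g = b) (t e) (s f))
    (e₀ : E) : ∃ L : List E, L ≠ [] ∧ (∀ e, e ∈ L) ∧ Cyc s t L := by
  -- initial closed trail through e₀
  have hF0 : ∀ v, ([] : List E).countP (fun e => decide (s e = v))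
      = ([] : List E).countP (fun e => decide (t e = v)) := fun v => rfl
  obtain ⟨M₀, hne₀, hpre₀, hnd₀, hch₀, hhead₀, hclosed₀⟩ :=
    extend_to_closed s t bal [] hF0 (Fintype.card E) [e₀] (by simp)
      (by simpa using List.nodup_singleton e₀) (List.isChain_singleton e₀) (by simp only [List.length_singleton]; omega)
  simp only [List.nil_append] at hnd₀
  have hcyc₀ : Cyc s t M₀ := cyc_mk s t M₀ hnd₀ hch₀ hne₀ hclosed₀
  have he₀ : e₀ ∈ M₀ := hpre₀.mem (by simp)
  -- main loop
  suffices h : ∀ (d : ℕ) (L : List E), L ≠ [] → Cyc s t L → Fintype.card E ≤ d + L.length →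
      ∃ L', L' ≠ [] ∧ (∀ e, e ∈ L') ∧ Cyc s t L' by
    exact h (Fintype.card E) M₀ hne₀ hcyc₀ (by omega)
  intro d
  induction d with
  | zero =>
    intro L hne hC hcard
    by_cases hall : ∀ e, e ∈ L
    · exact ⟨L, hne, hall, hC⟩
    · exfalso
      push_neg at hall
      obtain ⟨f, hf⟩ := hall
      have h1 : (f :: L).Nodup := List.nodup_cons.mpr ⟨hf, hC.1⟩
      have h2 := List.Nodup.length_le_card h1
      simp only [List.length_cons] at h2
      omega
  | succ d ih =>
    intro L hne hC hcard
    by_cases hall : ∀ e, e ∈ L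
    · exact ⟨L, hne, hall, hC⟩
    push_neg at hall
    obtain ⟨f, hf⟩ := hall
    obtain ⟨e, heL, g, hgL, hse⟩ := reach_escape s t hne hC conn f hf
    have hidx : L.idxOf g < L.length := List.idxOf_lt_length_iff.mpr hgL
    have hposL : 0 < L.length := List.length_pos_iff.mpr hne
    have hCr : Cyc s t (L.rotate (L.idxOf g)) := cyc_rotate hC _
    have hlenr : (L.rotate (L.idxOf g)).length = L.length := List.length_rotate L _
    have hner : L.rotate (L.idxOf g) ≠ [] := by
      intro h0; rw [h0] at hlenr; simp at hlenr; omega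
    have h0 : (0:ℕ) < (L.rotate (L.idxOf g)).length := by omega
    have hheadr : (L.rotate (L.idxOf g)).head hner = g := by
      have hg2 : (L.rotate (L.idxOf g)).get ⟨0, h0⟩ = g := by
        rw [List.get_rotate]
        have h1 : ((0:ℕ) + L.idxOf g) % L.length = L.idxOf g := by
          rw [Nat.zero_add, Nat.mod_eq_of_lt hidx]
        simp only [h1]
        exact List.idxOf_get hidx
      exact (List.get_mk_zero h0).symm.trans hg2
    have hmemr : ∀ x : E, x ∈ L.rotate (L.idxOf g) ↔ x ∈ L := fun x => List.mem_rotate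
    obtain ⟨M', hne', hpre', hnd', hch', hhead', hclosed'⟩ :=
      extend_to_closed s t bal (L.rotate (L.idxOf g)) (fun v => cyc_countP hCr v)
        (Fintype.card E) [e] (by simp)
        (by
          rw [List.nodup_append]
          exact ⟨hCr.1, List.nodup_singleton e, fun x hx y hy => by
            simp only [List.mem_singleton] at hy; subst hy; rintro rfl; exact heL ((hmemr x).mp hx)⟩)
        (List.isChain_singleton e)
        (by simp only [List.length_singleton]; omega)
    have hheadM' : M'.head hne' = e := by rw [hhead']; rfl
    have heM' : e ∈ M' := hpre'.mem (by simp)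
    have hneM1 : 1 ≤ M'.length := List.length_pos_iff.mpr hne'
    refine ih (L.rotate (L.idxOf g) ++ M')
      (fun hcontra => hner (List.append_eq_nil_iff.mp hcontra).1) ?_ ?_
    · refine cyc_mk s t _ hnd' ?_ (fun hcontra => hner (List.append_eq_nil_iff.mp hcontra).1) ?_
      · refine List.isChain_append.mpr ?_
        refine ⟨cyc_chain' hCr, hch', ?_⟩
        intro x hx y hy
        rw [List.getLast?_eq_getLast hner] at hx
        rw [List.head?_eq_head hne'] at hy
        simp only [Option.mem_some_iff] at hx hy
        rw [← hx, ← hy, cyc_wrap hCr hner, hheadr, hheadM', ← hse]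
      · rw [List.getLast_append, List.head_append_of_ne_nil hner]
        rw [dif_neg (by simp [hne'])]
        rw [hclosed', hheadM', hheadr, ← hse]
    · rw [List.length_append]; omega

end Euler


namespace UC

def pre {n k : ℕ} (w : Word n k) : Word (n-1) k :=
  fun i => w ⟨i.1, by have := i.isLt; omega⟩

def suf {n k : ℕ} (w : Word n k) : Word (n-1) k :=
  fun i => w ⟨i.1 + 1, by have := i.isLt; omega⟩

lemma wcongr {n k : ℕ} (a : Word n k) {i j : Fin n} (h : (i:ℕ) = j) : a i = a j := by
  congr 1; exact Fin.ext h

def rotR {n k : ℕ} (w : Word n k) : Word n k :=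
  fun i => w ⟨(i.1 + (n-1)) % n, Nat.mod_lt _ i.pos⟩

def rotL {n k : ℕ} (w : Word n k) : Word n k :=
  fun i => w ⟨(i.1 + 1) % n, Nat.mod_lt _ i.pos⟩

lemma rotL_rotR {n k : ℕ} (w : Word n k) : rotL (rotR w) = w := by
  funext i
  show w ⟨((i.1 + 1) % n + (n-1)) % n, _⟩ = w i
  apply wcongr
  show ((i.1 + 1) % n + (n-1)) % n = i.1
  have hpos : 0 < n := i.pos
  rw [Nat.mod_add_mod]
  rw [show i.1 + 1 + (n-1) = i.1 + n by omega]
  rw [Nat.add_mod_right, Nat.mod_eq_of_lt i.isLt]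

lemma rotR_rotL {n k : ℕ} (w : Word n k) : rotR (rotL w) = w := by
  funext i
  show w ⟨((i.1 + (n-1)) % n + 1) % n, _⟩ = w i
  apply wcongr
  show ((i.1 + (n-1)) % n + 1) % n = i.1
  have hpos : 0 < n := i.pos
  rw [Nat.mod_add_mod]
  rw [show i.1 + (n-1) + 1 = i.1 + n by omega]
  rw [Nat.add_mod_right, Nat.mod_eq_of_lt i.isLt]

lemma suf_rotR {n k : ℕ} {w : Word n k} {v : Word (n-1) k} (h : pre w = v) :
    suf (rotR w) = v := by
  funext j
  show w ⟨(j.1 + 1 + (n-1)) % n, _⟩ = v j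
  have hj := j.isLt
  rw [← h]
  show w _ = w _
  apply wcongr
  show (j.1 + 1 + (n-1)) % n = j.1
  rw [show j.1 + 1 + (n-1) = j.1 + n by omega]
  rw [Nat.add_mod_right, Nat.mod_eq_of_lt (by omega)]

lemma pre_rotL {n k : ℕ} {w : Word n k} {v : Word (n-1) k} (h : suf w = v) :
    pre (rotL w) = v := by
  funext j
  show w ⟨(j.1 + 1) % n, _⟩ = v j
  have hj := j.isLt
  rw [← h]
  show w _ = w _
  apply wcongr
  show (j.1 + 1) % n = j.1 + 1
  exact Nat.mod_eq_of_lt (by omega)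

lemma rotR_const {n k : ℕ} {w : Word n k} {c : Fin k} (h : rotR w = fun _ => c) :
    w = fun _ => c := by
  rw [← rotL_rotR w, h]; rfl

lemma rotL_const {n k : ℕ} {w : Word n k} {c : Fin k} (h : rotL w = fun _ => c) :
    w = fun _ => c := by
  rw [← rotR_rotL w, h]; rfl

/-- On the full universe, the number of words with a given prefix equals the number with the
same suffix. -/
lemma card_pre_eq_card_suf (n k : ℕ) (p : Word (n-1) k) :
    (Finset.univ.filter (fun v : Word n k => pre v = p)).card
    = (Finset.univ.filter (fun v : Word n k => suf v = p)).card := by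
  apply Finset.card_bij' (fun v _ => rotR v) (fun v _ => rotL v)
  · intro v hv
    simp only [Finset.mem_filter, Finset.mem_univ, true_and] at hv ⊢
    exact suf_rotR hv
  · intro v hv
    simp only [Finset.mem_filter, Finset.mem_univ, true_and] at hv ⊢
    exact pre_rotL hv
  · intro v _; exact rotL_rotR v
  · intro v _; exact rotR_rotL v

lemma necc (n k : ℕ) (hn : 2 ≤ n) (hk : 2 ≤ k) (w : Word n k)
    (h : HasUCycle ((Finset.univ : Finset (Word n k)) \ {w})) :
    ∃ x : Fin k, w = fun _ => x := by
  classical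
  obtain ⟨hnle, u, hu⟩ := h
  have hNpos : 0 < ((Finset.univ : Finset (Word n k)) \ {w}).card := by omega
  let Wd : Fin ((Finset.univ : Finset (Word n k)) \ {w}).card → Word n k :=
    fun i j => u ⟨((i:ℕ) + (j:ℕ)) % ((Finset.univ : Finset (Word n k)) \ {w}).card,
      Nat.mod_lt _ hNpos⟩
  let f : {v // v ∈ (Finset.univ : Finset (Word n k)) \ {w}} →
      Fin ((Finset.univ : Finset (Word n k)) \ {w}).card := fun v => (hu v.1 v.2).choose
  have hf : ∀ v, v.1 = Wd (f v) := by
    intro v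
    funext j
    exact (hu v.1 v.2).choose_spec.1 j
  have huniq : ∀ v (i : Fin ((Finset.univ : Finset (Word n k)) \ {w}).card),
      v.1 = Wd i → i = f v := by
    intro v i hi
    exact (hu v.1 v.2).choose_spec.2 i (fun j => congrFun hi j)
  have hinj : Function.Injective f := by
    intro v v' hvv
    apply Subtype.ext
    rw [hf v, hf v', hvv]
  have hbij : Function.Bijective f := by
    rw [Fintype.bijective_iff_injective_and_card]
    exact ⟨hinj, by rw [Fintype.card_coe, Fintype.card_fin]⟩
  have hWdS : ∀ i, Wd i ∈ (Finset.univ : Finset (Word n k)) \ {w} := by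
    intro i
    obtain ⟨v, hv⟩ := hbij.2 i
    rw [← hv, ← hf v]
    exact v.2
  have hfWd : ∀ (i) (hm : Wd i ∈ (Finset.univ : Finset (Word n k)) \ {w}),
      f ⟨Wd i, hm⟩ = i := by
    intro i hm
    exact (huniq ⟨Wd i, hm⟩ i rfl).symm
  let σ : Fin ((Finset.univ : Finset (Word n k)) \ {w}).card →
      Fin ((Finset.univ : Finset (Word n k)) \ {w}).card :=
    fun i => ⟨((i:ℕ) + 1) % _, Nat.mod_lt _ hNpos⟩
  let σ' : Fin ((Finset.univ : Finset (Word n k)) \ {w}).card →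
      Fin ((Finset.univ : Finset (Word n k)) \ {w}).card :=
    fun i => ⟨((i:ℕ) + (((Finset.univ : Finset (Word n k)) \ {w}).card - 1)) % _,
      Nat.mod_lt _ hNpos⟩
  have hσσ' : ∀ i, σ (σ' i) = i := by
    intro i
    apply Fin.ext
    show (((i:ℕ) + _) % _ + 1) % _ = (i:ℕ)
    rw [Nat.mod_add_mod,
      show (i:ℕ) + (((Finset.univ : Finset (Word n k)) \ {w}).card - 1) + 1
        = (i:ℕ) + ((Finset.univ : Finset (Word n k)) \ {w}).card by omega,
      Nat.add_mod_right, Nat.mod_eq_of_lt i.isLt]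
  have hσ'σ : ∀ i, σ' (σ i) = i := by
    intro i
    apply Fin.ext
    show (((i:ℕ) + 1) % _ + _) % _ = (i:ℕ)
    rw [Nat.mod_add_mod,
      show (i:ℕ) + 1 + (((Finset.univ : Finset (Word n k)) \ {w}).card - 1)
        = (i:ℕ) + ((Finset.univ : Finset (Word n k)) \ {w}).card by omega,
      Nat.add_mod_right, Nat.mod_eq_of_lt i.isLt]
  have hshift : ∀ i, suf (Wd i) = pre (Wd (σ i)) := by
    intro i
    funext j
    have hj := j.isLt
    show u ⟨((i:ℕ) + (j.1 + 1)) % _, _⟩ = u ⟨(((i:ℕ) + 1) % _ + j.1) % _, _⟩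
    apply wcongr
    show ((i:ℕ) + (j.1 + 1)) % _ = (((i:ℕ) + 1) % _ + j.1) % _
    rw [Nat.mod_add_mod, ← Nat.add_assoc,
      show (i:ℕ) + (j:ℕ) + 1 = (i:ℕ) + 1 + (j:ℕ) from by omega]
  have hAB : ∀ p : Word (n-1) k,
      (Finset.univ.filter (fun i => pre (Wd i) = p)).card
      = (Finset.univ.filter (fun i => suf (Wd i) = p)).card := by
    intro p
    refine Finset.card_bij' (fun i _ => σ' i) (fun i _ => σ i) ?_ ?_ ?_ ?_
    · intro i hi
      simp only [Finset.mem_filter, Finset.mem_univ, true_and] at hi ⊢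
      rw [hshift (σ' i), hσσ' i]
      exact hi
    · intro i hi
      simp only [Finset.mem_filter, Finset.mem_univ, true_and] at hi ⊢
      rw [← hshift i]
      exact hi
    · intro i _; exact hσσ' i
    · intro i _; exact hσ'σ i
  have hStoFin : ∀ (g : Word n k → Word (n-1) k) (p : Word (n-1) k),
      (((Finset.univ : Finset (Word n k)) \ {w}).filter (fun v => g v = p)).card
      = (Finset.univ.filter (fun i => g (Wd i) = p)).card := by
    intro g p
    refine Finset.card_bij' (fun v hv => f ⟨v, (Finset.mem_filter.mp hv).1⟩)
      (fun i _ => Wd i) ?_ ?_ ?_ ?_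
    · intro v hv
      simp only [Finset.mem_filter, Finset.mem_univ, true_and] at hv ⊢
      rw [← hf ⟨v, hv.1⟩]
      exact hv.2
    · intro i hi
      simp only [Finset.mem_filter, Finset.mem_univ, true_and] at hi
      exact Finset.mem_filter.mpr ⟨hWdS i, hi⟩
    · intro v hv
      exact (hf ⟨v, (Finset.mem_filter.mp hv).1⟩).symm
    · intro i _
      exact hfWd i (hWdS i)
  have hUtoS : ∀ (g : Word n k → Word (n-1) k) (p : Word (n-1) k),
      (Finset.univ.filter (fun v : Word n k => g v = p)).card
      = (((Finset.univ : Finset (Word n k)) \ {w}).filter (fun v => g v = p)).card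
        + (if g w = p then 1 else 0) := by
    intro g p
    have hdisj : Disjoint ((Finset.univ : Finset (Word n k)) \ {w}) ({w} : Finset (Word n k)) :=
      Finset.sdiff_disjoint
    have huniv : ((Finset.univ : Finset (Word n k)) \ {w}) ∪ {w}
        = (Finset.univ : Finset (Word n k)) := by
      rw [Finset.sdiff_union_self_eq_union]
      simp
    conv_lhs => rw [← huniv]
    rw [Finset.filter_union,
      Finset.card_union_of_disjoint (Finset.disjoint_filter_filter hdisj),
      Finset.filter_singleton]
    split_ifs <;> simp
  have hkey : ∀ p, (if pre w = p then 1 else 0) = (if suf w = p then 1 else 0) := by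
    intro p
    have h1 := hUtoS pre p
    have h2 := hUtoS suf p
    have h3 := card_pre_eq_card_suf n k p
    have h4 := hStoFin pre p
    have h5 := hStoFin suf p
    have h6 := hAB p
    omega
  have hps : suf w = pre w := by
    have hthis := hkey (pre w)
    rw [if_pos rfl] at hthis
    by_contra hcon
    rw [if_neg hcon] at hthis
    omega
  have hconst : ∀ (a : ℕ) (ha : a < n), w ⟨a, ha⟩ = w ⟨0, by omega⟩ := by
    intro a
    induction a with
    | zero => intro _; rfl
    | succ a ih =>
      intro ha
      have hstep : w ⟨a + 1, ha⟩ = w ⟨a, by omega⟩ := congrFun hps ⟨a, by omega⟩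
      rw [hstep, ih (by omega)]
  refine ⟨w ⟨0, by omega⟩, ?_⟩
  funext i
  have hi2 := hconst i.1 i.isLt
  rw [← hi2]

end UC

namespace UC

lemma bal_sub (n k : ℕ) (x : Fin k) (p : Word (n-1) k) :
    (Finset.univ.filter (fun e : {v : Word n k // v ≠ fun _ => x} => pre e.1 = p)).card
    = (Finset.univ.filter (fun e : {v : Word n k // v ≠ fun _ => x} => suf e.1 = p)).card := by
  apply Finset.card_bij' (fun e _ => (⟨rotR e.1, fun hc => e.2 (rotR_const hc)⟩ : {v : Word n k // v ≠ fun _ => x}))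
    (fun e _ => (⟨rotL e.1, fun hc => e.2 (rotL_const hc)⟩ : {v : Word n k // v ≠ fun _ => x}))
  · intro e he
    simp only [Finset.mem_filter, Finset.mem_univ, true_and] at he ⊢
    exact suf_rotR he
  · intro e he
    simp only [Finset.mem_filter, Finset.mem_univ, true_and] at he ⊢
    exact pre_rotL he
  · intro e _; exact Subtype.ext (rotL_rotR e.1)
  · intro e _; exact Subtype.ext (rotR_rotL e.1)

/-- One-step de Bruijn relation avoiding the constant word `x^n`. -/
def dstep (n k : ℕ) (x : Fin k) (a b : Word (n-1) k) : Prop :=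
  ∃ g : Word n k, g ≠ (fun _ => x) ∧ pre g = a ∧ suf g = b

def push {n k : ℕ} (p : Word (n-1) k) (c : Fin k) : Word n k :=
  fun i => if h : i.1 < n-1 then p ⟨i.1, h⟩ else c

lemma pre_push {n k : ℕ} (p : Word (n-1) k) (c : Fin k) : pre (push p c) = p := by
  funext j
  show push p c ⟨j.1, _⟩ = p j
  unfold push
  rw [dif_pos j.isLt]

def fA {n k : ℕ} (a : Word (n-1) k) (y : Fin k) (m : ℕ) : Word (n-1) k :=
  fun j => if h : j.1 + m < n-1 then a ⟨j.1 + m, h⟩ else y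

def fB {n k : ℕ} (b : Word (n-1) k) (y : Fin k) (m : ℕ) : Word (n-1) k :=
  fun j => if j.1 + m < n - 1 then y else b ⟨(j.1 + m - (n-1)) % (n-1), Nat.mod_lt _ j.pos⟩

lemma fA_zero {n k : ℕ} (a : Word (n-1) k) (y : Fin k) : fA a y 0 = a := by
  funext j
  unfold fA
  rw [dif_pos (by have := j.isLt; omega)]
  apply wcongr
  simp

lemma fA_top {n k : ℕ} (a : Word (n-1) k) (y : Fin k) : fA a y (n-1) = fun _ => y := by
  funext j
  unfold fA
  rw [dif_neg (by omega)]

lemma fB_zero {n k : ℕ} (b : Word (n-1) k) (y : Fin k) : fB b y 0 = fun _ => y := by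
  funext j
  unfold fB
  rw [if_pos (by have := j.isLt; omega)]

lemma fB_top {n k : ℕ} (b : Word (n-1) k) (y : Fin k) : fB b y (n-1) = b := by
  funext j
  unfold fB
  have hj := j.isLt
  rw [if_neg (by omega)]
  apply wcongr
  show (j.1 + (n-1) - (n-1)) % (n-1) = j.1
  rw [Nat.add_sub_cancel, Nat.mod_eq_of_lt hj]

lemma stepA {n k : ℕ} (hn : 2 ≤ n) {x y : Fin k} (hxy : y ≠ x)
    (a : Word (n-1) k) (m : ℕ) (hm : m + 1 ≤ n - 1) :
    dstep n k x (fA a y m) (fA a y (m+1)) := by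
  refine ⟨push (fA a y m) y, ?_, pre_push _ _, ?_⟩
  · intro hcon
    have : push (fA a y m) y ⟨n-1, by omega⟩ = x := by rw [hcon]
    unfold push at this
    rw [dif_neg (by simp)] at this
    exact hxy this
  · funext j
    have hj := j.isLt
    show push (fA a y m) y ⟨j.1 + 1, _⟩ = fA a y (m+1) j
    unfold push fA
    by_cases h1 : j.1 + (m+1) < n - 1
    · rw [dif_pos (by simp; omega), dif_pos (by simp; omega : ((⟨j.1 + 1, by omega⟩ : Fin (n-1)) : ℕ) + m < n - 1), dif_pos h1]
      apply wcongr
      simp; omega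
    · rw [dif_neg h1]
      by_cases h2 : j.1 + 1 < n - 1
      · rw [dif_pos (by simp; omega), dif_neg (by simp; omega)]
      · rw [dif_neg (by simp; omega)]

lemma stepB {n k : ℕ} (hn : 2 ≤ n) {x y : Fin k} (hxy : y ≠ x)
    (b : Word (n-1) k) (m : ℕ) (hm : m + 1 ≤ n - 1) :
    dstep n k x (fB b y m) (fB b y (m+1)) := by
  refine ⟨push (fB b y m) (b ⟨m, by omega⟩), ?_, pre_push _ _, ?_⟩
  · intro hcon
    have : push (fB b y m) (b ⟨m, by omega⟩) ⟨0, by omega⟩ = x := by rw [hcon]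
    unfold push at this
    rw [dif_pos (by simp; omega)] at this
    unfold fB at this
    rw [if_pos (by simp; omega)] at this
    exact hxy this
  · funext j
    have hj := j.isLt
    show push (fB b y m) _ ⟨j.1 + 1, _⟩ = fB b y (m+1) j
    unfold push fB
    by_cases h1 : j.1 + (m+1) < n - 1
    · rw [dif_pos (by simp; omega), if_pos (by simp; omega : ((⟨j.1 + 1, by omega⟩ : Fin (n-1)) : ℕ) + m < n-1), if_pos h1]
    · rw [if_neg h1]
      by_cases h2 : j.1 + 1 < n - 1
      · rw [dif_pos (by simp; omega), if_neg (by simp; omega)]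
        apply wcongr
        simp only [Fin.val_mk]
        congr 1
        omega
      · rw [dif_neg (by simp; omega)]
        apply wcongr
        simp only [Fin.val_mk]
        have hj2 : j.1 = n - 2 := by omega
        rw [show j.1 + (m+1) - (n-1) = m by omega, Nat.mod_eq_of_lt (by omega)]

lemma reach_all {n k : ℕ} (hn : 2 ≤ n) {x y : Fin k} (hxy : y ≠ x) (a b : Word (n-1) k) :
    Relation.ReflTransGen (dstep n k x) a b := by
  have hA : ∀ m, m ≤ n - 1 → Relation.ReflTransGen (dstep n k x) a (fA a y m) := by
    intro m
    induction m with
    | zero => intro _; rw [fA_zero]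
    | succ m ih =>
      intro hm
      exact (ih (by omega)).tail (stepA hn hxy a m hm)
  have hB : ∀ m, m ≤ n - 1 → Relation.ReflTransGen (dstep n k x) (fun _ => y) (fB b y m) := by
    intro m
    induction m with
    | zero => intro _; rw [fB_zero]
    | succ m ih =>
      intro hm
      exact (ih (by omega)).tail (stepB hn hxy b m hm)
  have h1 := hA (n-1) le_rfl
  have h2 := hB (n-1) le_rfl
  rw [fA_top] at h1
  rw [fB_top] at h2
  exact h1.trans h2

end UC

namespace UC

lemma card_words (n k : ℕ) : Fintype.card (Word n k) = k ^ n := by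
  simp [Fintype.card_fun]

lemma sdiff_card (n k : ℕ) (w : Word n k) :
    ((Finset.univ : Finset (Word n k)) \ {w}).card = k ^ n - 1 := by
  rw [Finset.card_sdiff_of_subset (by simp)]
  simp [Finset.card_univ, card_words]

lemma n_le_card (n k : ℕ) (hn : 2 ≤ n) (hk : 2 ≤ k) : n ≤ k ^ n - 1 := by
  have h1 : n < 2 ^ n := Nat.lt_two_pow_self
  have h2 : 2 ^ n ≤ k ^ n := Nat.pow_le_pow_left hk n
  omega

lemma suff (n k : ℕ) (hn : 2 ≤ n) (hk : 2 ≤ k) (x : Fin k) :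
    HasUCycle ((Finset.univ : Finset (Word n k)) \ {fun _ => x}) := by
  classical
  set S : Finset (Word n k) := Finset.univ \ {fun _ => x} with hS
  have hcardS : S.card = k ^ n - 1 := sdiff_card n k _
  -- the de Bruijn graph minus the loop at x^(n-1)
  let E := {v : Word n k // v ≠ fun _ => x}
  let s : E → Word (n-1) k := fun e => pre e.1
  let t : E → Word (n-1) k := fun e => suf e.1
  have bal : ∀ v, (Finset.univ.filter (fun e : E => s e = v)).card
      = (Finset.univ.filter (fun e : E => t e = v)).card := fun v => bal_sub n k x v
  -- a y ≠ x
  have hy : ((⟨(x.1+1) % k, Nat.mod_lt _ (by omega)⟩ : Fin k)) ≠ x := by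
    intro h
    have hv : (x.1+1) % k = x.1 := congrArg Fin.val h
    have hx := x.isLt
    rcases Nat.lt_or_ge (x.1+1) k with h1 | h1
    · rw [Nat.mod_eq_of_lt h1] at hv; omega
    · have h2 : x.1 + 1 = k := by omega
      rw [h2, Nat.mod_self] at hv; omega
  set y : Fin k := ⟨(x.1+1) % k, Nat.mod_lt _ (by omega)⟩ with hydef
  have conn : ∀ e f : E, Relation.ReflTransGen (fun a b => ∃ g : E, s g = a ∧ t g = b)
      (t e) (s f) := by
    intro e f
    refine Relation.ReflTransGen.mono ?_ _ _ (reach_all hn hy (t e) (s f))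
    rintro a b ⟨g, hg, h1, h2⟩
    exact ⟨⟨g, hg⟩, h1, h2⟩
  have e₀ : E := ⟨fun _ => y, fun hcon => hy (congrFun hcon ⟨0, by omega⟩)⟩
  obtain ⟨L, hLne, hLall, hLcyc⟩ := euler_circuit s t bal conn e₀
  -- basic cardinalities
  have hLfin : L.toFinset = Finset.univ := by
    ext e; simp [hLall e]
  have hLlen : L.length = k ^ n - 1 := by
    rw [← List.toFinset_card_of_nodup hLcyc.1, hLfin, Finset.card_univ]
    rw [Fintype.card_subtype_compl, Fintype.card_subtype_eq, card_words]
  have hlen : S.card = L.length := by rw [hcardS, hLlen]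
  have hNpos : 0 < L.length := List.length_pos_iff.mpr hLne
  -- the window lemma
  have claim : ∀ (j : ℕ), ∀ (i a : ℕ) (hi : i < L.length) (ha : a + j < n),
      (L.get ⟨(i + j) % L.length, Nat.mod_lt _ hNpos⟩).1 ⟨a, by omega⟩
      = (L.get ⟨i, hi⟩).1 ⟨a + j, ha⟩ := by
    intro j
    induction j with
    | zero =>
      intro i a hi ha
      have h0 : (i + 0) % L.length = i := by rw [Nat.add_zero, Nat.mod_eq_of_lt hi]
      simp only [h0]
      apply wcongr
      show (a : ℕ) = a + 0
      omega
    | succ j ih =>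
      intro i a hi ha
      have hadj := hLcyc.2 ((i + j) % L.length) (Nat.mod_lt _ hNpos)
      have hidx : (i + (j+1)) % L.length = ((i + j) % L.length + 1) % L.length := by
        rw [Nat.mod_add_mod, ← Nat.add_assoc]
      have ha' : (a : ℕ) < n - 1 := by omega
      have step1 : (L.get ⟨(i + (j+1)) % L.length, Nat.mod_lt _ hNpos⟩).1 ⟨a, by omega⟩
          = (L.get ⟨(i + j) % L.length, Nat.mod_lt _ hNpos⟩).1 ⟨a + 1, by omega⟩ := by
        have h2 : (s (L.get ⟨((i + j) % L.length + 1) % L.length, Nat.mod_lt _ hNpos⟩)) ⟨a, ha'⟩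
            = (t (L.get ⟨(i + j) % L.length, Nat.mod_lt _ hNpos⟩)) ⟨a, ha'⟩ := by rw [hadj]
        simp only [hidx]
        exact h2
      rw [step1, ih i (a+1) hi (by omega)]
      apply wcongr
      show a + 1 + j = a + (j + 1)
      omega
  refine ⟨by rw [hcardS]; exact n_le_card n k hn hk, ?_⟩
  refine ⟨fun i => (L.get ⟨i.1, by omega⟩).1 ⟨0, by omega⟩, ?_⟩
  intro v hv
  have hvne : v ≠ fun _ => x := by
    rw [hS] at hv
    simp only [Finset.mem_sdiff, Finset.mem_singleton] at hv
    exact hv.2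
  have hwin : ∀ (ii : ℕ) (hii : ii < L.length) (j : Fin n)
      (pf : (ii + (j:ℕ)) % S.card < L.length),
      (L.get ⟨(ii + (j:ℕ)) % S.card, pf⟩).1 ⟨0, by omega⟩
      = (L.get ⟨ii, hii⟩).1 j := by
    intro ii hii j pf
    have h1 : (ii + (j:ℕ)) % S.card = (ii + (j:ℕ)) % L.length :=
      congrArg (fun m => (ii + (j:ℕ)) % m) hlen
    simp only [h1]
    have h2 := claim j.1 ii 0 (by omega) (by have := j.isLt; omega)
    simp only [Nat.zero_add] at h2
    rw [h2]
  have hSpos : 0 < S.card := by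
    rw [hcardS]
    have := n_le_card n k hn hk
    omega
  have hmem : (⟨v, hvne⟩ : E) ∈ L := hLall _
  have hidxlt : List.idxOf (⟨v, hvne⟩ : E) L < L.length := List.idxOf_lt_length_iff.mpr hmem
  have hgetv : L.get ⟨List.idxOf (⟨v, hvne⟩ : E) L, hidxlt⟩ = ⟨v, hvne⟩ :=
    List.idxOf_get hidxlt
  refine ⟨⟨List.idxOf (⟨v, hvne⟩ : E) L, by omega⟩, ?_, ?_⟩
  · intro j
    beta_reduce
    simp only [Fin.val_mk]
    rw [hwin (List.idxOf (⟨v, hvne⟩ : E) L) hidxlt j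
      (by rw [← hlen]; exact Nat.mod_lt _ hSpos)]
    rw [hgetv]
  · intro i hi
    have hvi : ∀ j : Fin n, v j = (L.get ⟨i.1, by omega⟩).1 j := by
      intro j
      have h6 := hi j
      beta_reduce at h6
      rw [hwin (i:ℕ) (by omega) j (by rw [← hlen]; exact Nat.mod_lt _ hSpos)] at h6
      exact h6
    have hveq : L.get ⟨i.1, by omega⟩ = (⟨v, hvne⟩ : E) := by
      apply Subtype.ext
      exact (funext hvi).symm
    have hinj := List.nodup_iff_injective_get.mp hLcyc.1
    have h5 := hinj (hveq.trans hgetv.symm)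
    have hval : (i : ℕ) = List.idxOf (⟨v, hvne⟩ : E) L := congrArg Fin.val h5
    exact Fin.ext hval

end UC

theorem ucycle_remove_one_iff_constant (n k : ℕ) (hn : 2 ≤ n) (hk : 2 ≤ k) :
    (∀ w : Word n k,
      HasUCycle ((Finset.univ : Finset (Word n k)) \ {w}) ↔ ∃ x : Fin k, w = fun _ => x) ∧
    (Nat.card {w : Word n k // HasUCycle ((Finset.univ : Finset (Word n k)) \ {w})} : ℚ)
        / (k ^ n) = 1 / (k : ℚ) ^ (n - 1) := by
  have hiff : ∀ w : Word n k,
      HasUCycle ((Finset.univ : Finset (Word n k)) \ {w}) ↔ ∃ x : Fin k, w = fun _ => x := by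
    intro w
    constructor
    · exact UC.necc n k hn hk w
    · rintro ⟨x, rfl⟩
      exact UC.suff n k hn hk x
  refine ⟨hiff, ?_⟩
  have hcard : Nat.card {w : Word n k // HasUCycle ((Finset.univ : Finset (Word n k)) \ {w})}
      = k := by
    have e1 : {w : Word n k // HasUCycle ((Finset.univ : Finset (Word n k)) \ {w})}
        ≃ {w : Word n k // ∃ x : Fin k, w = fun _ => x} :=
      Equiv.subtypeEquivRight hiff
    have e2 : {w : Word n k // ∃ x : Fin k, w = fun _ => x} ≃ Fin k :=
      { toFun := fun w => w.1 ⟨0, by omega⟩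
        invFun := fun c => ⟨fun _ => c, ⟨c, rfl⟩⟩
        left_inv := by
          rintro ⟨w, x, rfl⟩
          rfl
        right_inv := fun c => rfl }
    rw [Nat.card_congr (e1.trans e2), Nat.card_eq_fintype_card, Fintype.card_fin]
  rw [hcard]
  have hk0 : (k:ℚ) ≠ 0 := Nat.cast_ne_zero.mpr (by omega)
  have hpow : ((k:ℚ)) ^ n = (k:ℚ) * (k:ℚ) ^ (n-1) := by
    rw [← pow_succ']
    congr 1
    omega
  have h1 : ((k:ℚ)) ^ n ≠ 0 := pow_ne_zero _ hk0
  have h2 : ((k:ℚ)) ^ (n-1) ≠ 0 := pow_ne_zero _ hk0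
  rw [div_eq_div_iff h1 h2, one_mul, hpow]
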